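/- If the determinisation ARS Det(𝒜) = (Dist(A), ↠) of a PARS 𝒜 is confluent, then 𝒜 has unique terminal distributions: for any element a and any two maximal finite computation trees T₁, T₂ rooted at a, supp(T₁) ≈ supp(T₂). -/

import Mathlib

open Relation
open scoped NNReal

abbrev PDist (A : Type) := List (ℝ≥0 × A)

namespace PPARS

variable {A X : Type}

/-- Total weight of a list distribution. -/
def weight (D : PDist A) : ℝ≥0 := (D.map Prod.fst).sum

/-- Scale every weight of a distribution by `α`. -/
def scale (α : ℝ≥0) (D : PDist A) : PDist A := D.map (fun pa => (α * pa.1, pa.2))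

open Classical in
/-- Total weight that `D` assigns to the element `a`. -/
noncomputable def wt (D : PDist A) (a : A) : ℝ≥0 :=
  (D.map (fun pa => if pa.2 = a then pa.1 else 0)).sum

/-- The Flip rule, closed under list contexts. -/
inductive FlipS : PDist A → PDist A → Prop
  | mk (E₁ E₂ : PDist A) (p q : ℝ≥0) (a b : A) :
      FlipS (E₁ ++ [(p,a),(q,b)] ++ E₂) (E₁ ++ [(q,b),(p,a)] ++ E₂)

/-- The Join rule, closed under list contexts. -/
inductive JoinS : PDist A → PDist A → Prop
  | mk (E₁ E₂ : PDist A) (p q : ℝ≥0) (a : A) :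
      JoinS (E₁ ++ [(p,a),(q,a)] ++ E₂) (E₁ ++ [(p+q,a)] ++ E₂)

/-- The Split rule, closed under list contexts. -/
inductive SplitS : PDist A → PDist A → Prop
  | mk (E₁ E₂ : PDist A) (p q : ℝ≥0) (a : A) :
      SplitS (E₁ ++ [(p+q,a)] ++ E₂) (E₁ ++ [(p,a),(q,a)] ++ E₂)

/-- One `∼`-step: congruence closure of Flip, Join and Split. -/
def SimStep (D E : PDist A) : Prop := FlipS D E ∨ JoinS D E ∨ SplitS D E

/-- One Flip-or-Join step. -/
def FJ (D E : PDist A) : Prop := FlipS D E ∨ JoinS D E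

/-- Distribution equivalence `≈`. -/
def DEquiv : PDist A → PDist A → Prop := ReflTransGen SimStep

/-- Parallel evolution `⇒_P` for a PARS relation `R`. -/
inductive PEvol (R : A → PDist A → Prop) : PDist A → PDist A → Prop
  | nil : PEvol R [] []
  | keep {ds ds' : PDist A} (p : ℝ≥0) (a : A) :
      PEvol R ds ds' → PEvol R ((p,a) :: ds) ((p,a) :: ds')
  | evolve {a : A} {D ds ds' : PDist A} (p : ℝ≥0) :
      R a D → PEvol R ds ds' → PEvol R ((p,a) :: ds) (scale p D ++ ds')

/-- Proper parallel evolution `⇒_P¹`: at least one element evolves. -/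
inductive PEvol1 (R : A → PDist A → Prop) : PDist A → PDist A → Prop
  | evolve {a : A} {D ds ds' : PDist A} (p : ℝ≥0) :
      R a D → PEvol R ds ds' → PEvol1 R ((p,a) :: ds) (scale p D ++ ds')
  | keep {ds ds' : PDist A} (p : ℝ≥0) (a : A) :
      PEvol1 R ds ds' → PEvol1 R ((p,a) :: ds) ((p,a) :: ds')

/-- The determinisation relation `↠ = ⇒_P ∪ ≈`. -/
def Red (R : A → PDist A → Prop) (D E : PDist A) : Prop := PEvol R D E ∨ DEquiv D E

/-- `R` defines a PARS: successor distributions are normalised. -/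
def IsPARS (R : A → PDist A → Prop) : Prop := ∀ a D, R a D → weight D = 1

/-- A terminal element has no successor distribution. -/
def Terminal (R : A → PDist A → Prop) (a : A) : Prop := ∀ D, ¬ R a D

/-- A terminal distribution contains only terminal elements. -/
def TerminalD (R : A → PDist A → Prop) (D : PDist A) : Prop := ∀ pa ∈ D, Terminal R pa.2

/-- Classical confluence of a relation. -/
def Confluent (r : X → X → Prop) : Prop :=
  ∀ a b c, ReflTransGen r a b → ReflTransGen r a c →
    ∃ d, ReflTransGen r b d ∧ ReflTransGen r c d

/-- Raw (finite) computation trees. -/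
inductive CTree (A : Type) where
  | leaf (a : A)
  | node (a : A) (cs : List (ℝ≥0 × CTree A))

def CTree.root : CTree A → A
  | .leaf a => a
  | .node a _ => a

/-- `IsTree R t a`: `t` is a computation tree of the PARS `R` with root `a`. -/
inductive IsTree (R : A → PDist A → Prop) : CTree A → A → Prop
  | leaf (a : A) : IsTree R (.leaf a) a
  | node (a : A) (cs : List (ℝ≥0 × CTree A)) :
      R a (cs.map fun x => (x.1, x.2.root)) →
      (∀ x ∈ cs, IsTree R x.2 x.2.root) →
      IsTree R (.node a cs) a

mutual
/-- Support of a computation tree. -/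
def supp : CTree A → PDist A
  | .leaf a => [(1, a)]
  | .node _ cs => suppL cs
def suppL : List (ℝ≥0 × CTree A) → PDist A
  | [] => []
  | (p, t) :: ts => scale p (supp t) ++ suppL ts
end

/-- A tree is maximal when all its leaves are terminal elements. -/
inductive MaximalT (R : A → PDist A → Prop) : CTree A → Prop
  | leaf (a : A) : Terminal R a → MaximalT R (.leaf a)
  | node (a : A) (cs : List (ℝ≥0 × CTree A)) :
      (∀ x ∈ cs, MaximalT R x.2) → MaximalT R (.node a cs)

end PPARS

section Aux
open PPARS Relation
variable {A : Type} {R : A → PDist A → Prop}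

lemma scale_append (p : ℝ≥0) (D E : PDist A) :
    scale p (D ++ E) = scale p D ++ scale p E := List.map_append

lemma scale_scale (p q : ℝ≥0) (D : PDist A) :
    scale p (scale q D) = scale (p * q) D := by
  simp [scale, List.map_map, Function.comp_def, mul_assoc]

lemma peRefl (D : PDist A) : PEvol R D D := by
  induction D with
  | nil => exact .nil
  | cons pa ds ih => exact .keep pa.1 pa.2 ih

lemma peAppend {D D' E E' : PDist A} (h₁ : PEvol R D D') (h₂ : PEvol R E E') :
    PEvol R (D ++ E) (D' ++ E') := by
  induction h₁ with
  | nil => exact h₂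
  | keep p a _ ih => exact .keep p a ih
  | evolve p hr _ ih =>
      rw [List.append_assoc]
      exact .evolve p hr ih

lemma rtgAppend {D D' E E' : PDist A}
    (h₁ : ReflTransGen (PEvol R) D D') (h₂ : ReflTransGen (PEvol R) E E') :
    ReflTransGen (PEvol R) (D ++ E) (D' ++ E') := by
  have step1 : ReflTransGen (PEvol R) (D ++ E) (D' ++ E) := by
    induction h₁ with
    | refl => exact .refl
    | tail _ h ih => exact ih.tail (peAppend h (peRefl E))
  refine step1.trans ?_
  induction h₂ with
  | refl => exact .refl
  | tail _ h ih => exact ih.tail (peAppend (peRefl D') h)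

lemma list_red (cs : List (ℝ≥0 × CTree A))
    (hall : ∀ x ∈ cs, ∀ p, ReflTransGen (PEvol R) [(p, (x:ℝ≥0 × CTree A).2.root)] (scale p (supp x.2)))
    (q : ℝ≥0) :
    ReflTransGen (PEvol R) (scale q (cs.map fun x => (x.1, x.2.root))) (scale q (suppL cs)) := by
  induction cs generalizing q with
  | nil => exact ReflTransGen.refl
  | cons c ts iht =>
      have hc := hall c (by simp)
      have hts := iht (fun x hx => hall x (by simp [hx]))
      have heq : scale q ((c :: ts).map fun x => (x.1, x.2.root))
          = [(q * c.1, c.2.root)] ++ scale q (ts.map fun x => (x.1, x.2.root)) := by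
        simp [scale]
      rw [heq, suppL, scale_append, scale_scale]
      exact rtgAppend (hc (q * c.1)) (hts q)

lemma tree_red {T : CTree A} {b : A} (h : IsTree R T b) :
    ∀ p, ReflTransGen (PEvol R) [(p, b)] (scale p (supp T)) := by
  induction h with
  | leaf a => intro p; simp only [supp, scale, List.map_cons, List.map_nil, mul_one]; exact ReflTransGen.refl
  | node a cs hr _ ih =>
      intro p
      have step : PEvol R [(p, a)] (scale p (cs.map fun x => (x.1, x.2.root)) ++ []) :=
        .evolve p hr .nil
      rw [List.append_nil] at step
      exact ReflTransGen.head step (list_red cs ih p)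

lemma terminalD_suppL (cs : List (ℝ≥0 × CTree A))
    (h : ∀ x ∈ cs, TerminalD R (supp (x:ℝ≥0 × CTree A).2)) : TerminalD R (suppL cs) := by
  induction cs with
  | nil => intro pa hpa; simp [suppL] at hpa
  | cons c ts iht =>
      intro pa hpa
      rw [suppL] at hpa
      rcases List.mem_append.1 hpa with hm | hm
      · simp only [scale, List.mem_map] at hm
        obtain ⟨qa, hqa, rfl⟩ := hm
        exact h c (by simp) qa hqa
      · exact iht (fun x hx => h x (by simp [hx])) pa hm

lemma terminalD_supp {T : CTree A} (m : MaximalT R T) : TerminalD R (supp T) := by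
  induction m with
  | leaf a ht =>
      intro pa hpa
      simp only [supp, List.mem_singleton] at hpa
      subst hpa; exact ht
  | node a cs _ ih => exact terminalD_suppL cs ih

lemma terminal_pe {D E : PDist A} (hD : TerminalD R D) (h : PEvol R D E) : E = D := by
  induction h with
  | nil => rfl
  | keep p a _ ih =>
      have hD' : TerminalD R _ := fun pa hpa => hD pa (List.mem_cons_of_mem _ hpa)
      rw [ih hD']
  | evolve p hr _ _ =>
      exact absurd hr (hD _ List.mem_cons_self _)

lemma terminalD_sim {D E : PDist A} (hD : TerminalD R D) (h : SimStep D E) :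
    TerminalD R E := by
  rcases h with h | h | h
  · cases h with
    | mk E₁ E₂ p q a b =>
        intro pa hpa
        apply hD pa
        simp only [List.mem_append, List.mem_cons] at hpa ⊢
        tauto
  · cases h with
    | mk E₁ E₂ p q a =>
        intro pa hpa
        rcases List.mem_append.1 hpa with hm | hm
        · rcases List.mem_append.1 hm with hm | hm
          · exact hD pa (List.mem_append.2 (Or.inl (List.mem_append.2 (Or.inl hm))))
          · rw [List.mem_singleton] at hm
            rw [hm]
            exact hD (p, a) (List.mem_append.2 (Or.inl (List.mem_append.2 (Or.inr (by simp)))))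
        · exact hD pa (List.mem_append.2 (Or.inr hm))
  · cases h with
    | mk E₁ E₂ p q a =>
        intro pa hpa
        rcases List.mem_append.1 hpa with hm | hm
        · rcases List.mem_append.1 hm with hm | hm
          · exact hD pa (List.mem_append.2 (Or.inl (List.mem_append.2 (Or.inl hm))))
          · have hpa2 : pa.2 = a := by
              rcases List.mem_cons.1 hm with hm | hm
              · rw [hm]
              · rw [List.mem_singleton] at hm; rw [hm]
            rw [hpa2]
            exact hD (p + q, a)
              (List.mem_append.2 (Or.inl (List.mem_append.2 (Or.inr (by simp)))))
        · exact hD pa (List.mem_append.2 (Or.inr hm))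

lemma terminalD_dequiv {D E : PDist A} (hD : TerminalD R D) (h : DEquiv D E) :
    TerminalD R E := by
  induction h with
  | refl => exact hD
  | tail _ hs ih => exact terminalD_sim ih hs

lemma simStep_symm : Symmetric (@SimStep A) := by
  intro D E h
  rcases h with h | h | h
  · cases h with
    | mk E₁ E₂ p q a b => exact Or.inl (FlipS.mk E₁ E₂ q p b a)
  · cases h with
    | mk E₁ E₂ p q a => exact Or.inr (Or.inr (SplitS.mk E₁ E₂ p q a))
  · cases h with
    | mk E₁ E₂ p q a => exact Or.inr (Or.inl (JoinS.mk E₁ E₂ p q a))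

lemma dequiv_symm {D E : PDist A} (h : DEquiv D E) : DEquiv E D :=
  by
    haveI : Std.Symm (@SimStep A) := ⟨fun _ _ h => simStep_symm h⟩
    exact Std.Symm.symm (r := ReflTransGen (@SimStep A)) _ _ h

lemma terminal_red_dequiv {D E : PDist A} (hD : TerminalD R D)
    (h : ReflTransGen (Red R) D E) : DEquiv D E := by
  induction h with
  | refl => exact ReflTransGen.refl
  | tail hmid hs ih =>
      rcases hs with hs | hs
      · rw [terminal_pe (terminalD_dequiv hD ih) hs]; exact ih
      · exact ih.trans hs

end Aux

open PPARS Relation in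
/-- If the determinisation of a PARS is confluent, the PARS has unique terminal
distributions: supports of maximal finite trees with a common root are equivalent. -/
theorem cr_implies_utd {A : Type} (R : A → PDist A → Prop) (hR : IsPARS R)
    (hconf : Confluent (Red R)) {a : A} {T₁ T₂ : CTree A}
    (h₁ : IsTree R T₁ a) (h₂ : IsTree R T₂ a)
    (m₁ : MaximalT R T₁) (m₂ : MaximalT R T₂) :
    DEquiv (supp T₁) (supp T₂) := by
  have scale_one : ∀ D : PDist A, scale 1 D = D := by
    intro D; simp [scale]
  have red₁ : ReflTransGen (Red R) [(1, a)] (supp T₁) := by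
    have := tree_red h₁ 1
    rw [scale_one] at this
    exact ReflTransGen.mono (fun _ _ h => Or.inl h) _ _ this
  have red₂ : ReflTransGen (Red R) [(1, a)] (supp T₂) := by
    have := tree_red h₂ 1
    rw [scale_one] at this
    exact ReflTransGen.mono (fun _ _ h => Or.inl h) _ _ this
  obtain ⟨D, hD₁, hD₂⟩ := hconf _ _ _ red₁ red₂
  have e₁ : DEquiv (supp T₁) D := terminal_red_dequiv (terminalD_supp m₁) hD₁
  have e₂ : DEquiv (supp T₂) D := terminal_red_dequiv (terminalD_supp m₂) hD₂
  exact e₁.trans (dequiv_symm e₂)
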